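/- Let f : ℝ^{d_x} × ℝ^{d_y} → ℝ be differentiable and suppose that for every y the map x ↦ ∇_x f(x,y) is L_x-Lipschitz and for every x the map y ↦ ∇_y f(x,y) is L_y-Lipschitz. Fix (x,y), μ₁ > 0 and μ₂ > 0. If u is uniformly distributed on the unit sphere of ℝ^{d_x}, then E‖(d_x/μ₁)(f(x+μ₁u, y) − f(x,y)) u‖² ≤ 2 d_x ‖∇_x f(x,y)‖² + μ₁² d_x² L_x² / 2; and if v is uniformly distributed on the unit sphere of ℝ^{d_y}, then E‖(d_y/μ₂)(f(x, y+μ₂v) − f(x,y)) v‖² ≤ 2 d_y ‖∇_y f(x,y)‖² + μ₂² d_y² L_y² / 2. -/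

import Mathlib

open MeasureTheory Metric
open scoped ENNReal RealInnerProductSpace

/-- Uniform probability measure on the closed unit Euclidean ball of `ℝ^d`
(normalized Lebesgue measure on the ball). -/
noncomputable def ballUniform (d : ℕ) : Measure (EuclideanSpace ℝ (Fin d)) :=
  (volume (closedBall (0 : EuclideanSpace ℝ (Fin d)) 1))⁻¹ •
    volume.restrict (closedBall (0 : EuclideanSpace ℝ (Fin d)) 1)

instance ballUniform_prob (d : ℕ) : IsProbabilityMeasure (ballUniform d) := by
  constructor
  rw [ballUniform, Measure.smul_apply, Measure.restrict_apply MeasurableSet.univ,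
    Set.univ_inter, smul_eq_mul]
  exact ENNReal.inv_mul_cancel
    (measure_closedBall_pos volume (0 : EuclideanSpace ℝ (Fin d)) one_pos).ne'
    measure_closedBall_lt_top.ne

lemma ballUniform_map (d : ℕ)
    (e : EuclideanSpace ℝ (Fin d) ≃ₗᵢ[ℝ] EuclideanSpace ℝ (Fin d)) :
    (ballUniform d).map e = ballUniform d := by
  have hpre : e ⁻¹' closedBall (0 : EuclideanSpace ℝ (Fin d)) 1 = closedBall 0 1 := by
    ext z; simp [mem_closedBall, dist_eq_norm]
  have hres : Measure.map e (volume.restrict (closedBall 0 1)) =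
      volume.restrict (closedBall (0 : EuclideanSpace ℝ (Fin d)) 1) := by
    conv_lhs => rw [← hpre]
    rw [← Measure.restrict_map e.continuous.measurable measurableSet_closedBall,
      e.measurePreserving.map_eq]
  rw [ballUniform, Measure.map_smul, hres]

lemma ballUniform_ae_ne_zero (d : ℕ) (hd : 1 ≤ d) :
    ∀ᵐ x ∂ballUniform d, x ≠ 0 := by
  have : Nonempty (Fin d) := ⟨⟨0, Nat.lt_of_lt_of_le Nat.zero_lt_one hd⟩⟩
  rw [ae_iff]
  have h1 : {x : EuclideanSpace ℝ (Fin d) | ¬ x ≠ 0} = {0} := by ext z; simp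
  rw [h1, ballUniform, Measure.smul_apply, Measure.restrict_apply (measurableSet_singleton 0)]
  have : volume ({(0 : EuclideanSpace ℝ (Fin d))} ∩ closedBall 0 1) = 0 :=
    measure_mono_null Set.inter_subset_left (measure_singleton 0)
  simp [this]

/-- Uniform probability measure on the unit Euclidean sphere of `ℝ^d`, realized as the
pushforward of the uniform measure on the unit ball under the radial projection
`x ↦ x/‖x‖`; this coincides with the normalized surface (rotation invariant) measure. -/
noncomputable def sphereUniform (d : ℕ) : Measure (EuclideanSpace ℝ (Fin d)) :=
  (ballUniform d).map fun x => ‖x‖⁻¹ • x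

lemma radial_measurable (d : ℕ) :
    Measurable fun x : EuclideanSpace ℝ (Fin d) => ‖x‖⁻¹ • x :=
  (measurable_norm.inv).smul measurable_id

instance sphereUniform_prob (d : ℕ) : IsProbabilityMeasure (sphereUniform d) :=
  Measure.isProbabilityMeasure_map (radial_measurable d).aemeasurable

lemma sphereUniform_ae_norm_one (d : ℕ) (hd : 1 ≤ d) :
    ∀ᵐ u ∂sphereUniform d, ‖u‖ = 1 := by
  rw [sphereUniform, ae_map_iff (radial_measurable d).aemeasurable
    (measurableSet_eq_fun measurable_norm measurable_const)]
  filter_upwards [ballUniform_ae_ne_zero d hd] with x hx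
  simp only [Set.mem_setOf_eq, norm_smul, norm_inv, norm_norm]
  exact inv_mul_cancel₀ (norm_ne_zero_iff.mpr hx)

lemma ratio_meas (d : ℕ) (G : EuclideanSpace ℝ (Fin d)) :
    Measurable fun x : EuclideanSpace ℝ (Fin d) => ⟪G, x⟫ ^ 2 / ‖x‖ ^ 2 :=
  (((continuous_const.inner continuous_id).pow 2).measurable).div
    ((continuous_norm.pow 2).measurable)

lemma ratio_bound (d : ℕ) (G x : EuclideanSpace ℝ (Fin d)) :
    |⟪G, x⟫ ^ 2 / ‖x‖ ^ 2| ≤ ‖G‖ ^ 2 := by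
  rcases eq_or_ne x 0 with rfl | hx
  · simp
  · have hxp : (0:ℝ) < ‖x‖ ^ 2 := pow_pos (norm_pos_iff.mpr hx) 2
    rw [abs_div, abs_of_nonneg (by positivity : (0:ℝ) ≤ ⟪G, x⟫ ^ 2),
      abs_of_nonneg hxp.le, div_le_iff₀ hxp]
    calc ⟪G, x⟫ ^ 2 = |⟪G, x⟫| ^ 2 := (sq_abs _).symm
      _ ≤ (‖G‖ * ‖x‖) ^ 2 := by
          gcongr; exact abs_real_inner_le_norm G x
      _ = ‖G‖ ^ 2 * ‖x‖ ^ 2 := by ring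

lemma ratio_integrable (d : ℕ) (G : EuclideanSpace ℝ (Fin d)) :
    Integrable (fun x => ⟪G, x⟫ ^ 2 / ‖x‖ ^ 2) (ballUniform d) := by
  refine (integrable_const (‖G‖ ^ 2)).mono'
    (ratio_meas d G).aestronglyMeasurable ?_
  refine Filter.Eventually.of_forall fun x => ?_
  rw [Real.norm_eq_abs]
  exact ratio_bound d G x

lemma ratio_integral_rot (d : ℕ)
    (G : EuclideanSpace ℝ (Fin d))
    (e : EuclideanSpace ℝ (Fin d) ≃ₗᵢ[ℝ] EuclideanSpace ℝ (Fin d)) :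
    ∫ x, ⟪G, x⟫ ^ 2 / ‖x‖ ^ 2 ∂ballUniform d
      = ∫ x, ⟪e.symm G, x⟫ ^ 2 / ‖x‖ ^ 2 ∂ballUniform d := by
  conv_lhs => rw [← ballUniform_map d e]
  rw [integral_map e.continuous.measurable.aemeasurable
    (ratio_meas d G).aestronglyMeasurable]
  congr 1
  ext x
  have h1 : ⟪G, e x⟫ = ⟪e.symm G, x⟫ := by
    conv_lhs => rw [← e.apply_symm_apply G]
    exact e.inner_map_map _ _
  rw [h1, e.norm_map]

lemma ratio_integral_unit (d : ℕ) (hd : 1 ≤ d) (v : EuclideanSpace ℝ (Fin d))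
    (hv : ‖v‖ = 1) :
    ∫ x, ⟪v, x⟫ ^ 2 / ‖x‖ ^ 2 ∂ballUniform d = 1 / d := by
  have hd0 : (0 : ℕ) < d := hd
  set i0 : Fin d := ⟨0, hd0⟩
  have card_eq : Module.finrank ℝ (EuclideanSpace ℝ (Fin d)) = Fintype.card (Fin d) := by
    simp
  have hcoord : ∀ w : EuclideanSpace ℝ (Fin d), ‖w‖ = 1 →
      ∫ x, ⟪w, x⟫ ^ 2 / ‖x‖ ^ 2 ∂ballUniform d
        = ∫ x, ⟪EuclideanSpace.single i0 (1:ℝ), x⟫ ^ 2 / ‖x‖ ^ 2 ∂ballUniform d := by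
    intro w hw
    have horth : Orthonormal ℝ (Set.restrict {i0} (fun _ : Fin d => w)) := by
      constructor
      · intro i; exact hw
      · intro i j hij
        have h1 : (i : Fin d) = i0 := i.2
        have h2 : (j : Fin d) = i0 := j.2
        exact absurd (Subtype.ext (h1.trans h2.symm)) hij
    obtain ⟨b, hb⟩ := horth.exists_orthonormalBasis_extension_of_card_eq card_eq
    have hbi0 : b i0 = w := hb i0 rfl
    have hrw : b.repr w = EuclideanSpace.single i0 (1:ℝ) := by
      rw [← hbi0]; exact b.repr_self i0
    have := ratio_integral_rot d w b.repr.symm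
    rwa [LinearIsometryEquiv.symm_symm, hrw] at this
  have hsingle : ∀ i : Fin d, ‖EuclideanSpace.single i (1:ℝ)‖ = 1 := by
    intro i; simp [EuclideanSpace.norm_single]
  set S := ∫ x, ⟪EuclideanSpace.single i0 (1:ℝ), x⟫ ^ 2 / ‖x‖ ^ 2 ∂ballUniform d with hS
  have hvS : ∫ x, ⟪v, x⟫ ^ 2 / ‖x‖ ^ 2 ∂ballUniform d = S := hcoord v hv
  have hsum : ∑ i : Fin d, (∫ x, ⟪EuclideanSpace.single i (1:ℝ), x⟫ ^ 2 / ‖x‖ ^ 2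
      ∂ballUniform d) = 1 := by
    rw [← integral_finset_sum _ (fun i _ => ratio_integrable d _)]
    have : ∫ x, (∑ i : Fin d, ⟪EuclideanSpace.single i (1:ℝ), x⟫ ^ 2 / ‖x‖ ^ 2)
        ∂ballUniform d = ∫ (_ : EuclideanSpace ℝ (Fin d)), (1:ℝ) ∂ballUniform d := by
      refine integral_congr_ae ?_
      filter_upwards [ballUniform_ae_ne_zero d hd] with x hx
      have hxp : (0:ℝ) < ‖x‖ ^ 2 := pow_pos (norm_pos_iff.mpr hx) 2
      have hnorm : ∑ i : Fin d, ⟪EuclideanSpace.single i (1:ℝ), x⟫ ^ 2 = ‖x‖ ^ 2 := by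
        have h1 : ∀ i : Fin d, ⟪EuclideanSpace.single i (1:ℝ), x⟫ = x i := by
          intro i; simp [EuclideanSpace.inner_single_left]
        simp only [h1]
        rw [EuclideanSpace.norm_eq, Real.sq_sqrt (by positivity)]
        exact Finset.sum_congr rfl fun i _ => by rw [Real.norm_eq_abs, sq_abs]
      rw [← Finset.sum_div, hnorm, div_self hxp.ne']
    rw [this, integral_const]
    simp
  have hall : ∀ i : Fin d, (∫ x, ⟪EuclideanSpace.single i (1:ℝ), x⟫ ^ 2 / ‖x‖ ^ 2
      ∂ballUniform d) = S := fun i => hcoord _ (hsingle i)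
  rw [Finset.sum_congr rfl (fun i _ => hall i), Finset.sum_const, Finset.card_univ,
    Fintype.card_fin, nsmul_eq_mul] at hsum
  rw [hvS]
  have hdne : (d : ℝ) ≠ 0 := Nat.cast_ne_zero.mpr hd0.ne'
  field_simp
  linarith [hsum]


lemma ratio_integral (d : ℕ) (hd : 1 ≤ d) (G : EuclideanSpace ℝ (Fin d)) :
    ∫ x, ⟪G, x⟫ ^ 2 / ‖x‖ ^ 2 ∂ballUniform d = ‖G‖ ^ 2 / d := by
  rcases eq_or_ne G 0 with rfl | hG
  · simp
  · have hGp : 0 < ‖G‖ := norm_pos_iff.mpr hG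
    have hv : ‖(‖G‖⁻¹ • G)‖ = 1 := by
      rw [norm_smul, norm_inv, norm_norm]
      exact inv_mul_cancel₀ hGp.ne'
    have key := ratio_integral_unit d hd _ hv
    have hpt : ∀ x : EuclideanSpace ℝ (Fin d),
        ⟪G, x⟫ ^ 2 / ‖x‖ ^ 2 = ‖G‖ ^ 2 * (⟪‖G‖⁻¹ • G, x⟫ ^ 2 / ‖x‖ ^ 2) := by
      intro x
      rw [real_inner_smul_left]
      rcases eq_or_ne x 0 with rfl | hx
      · simp
      · have hxp : (0:ℝ) < ‖x‖ ^ 2 := pow_pos (norm_pos_iff.mpr hx) 2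
        field_simp
    simp_rw [hpt]
    rw [integral_const_mul, key]
    field_simp

lemma sphere_moment (d : ℕ) (hd : 1 ≤ d) (G : EuclideanSpace ℝ (Fin d)) :
    ∫ u, ⟪G, u⟫ ^ 2 ∂sphereUniform d = ‖G‖ ^ 2 / d := by
  have hm : AEStronglyMeasurable (fun u : EuclideanSpace ℝ (Fin d) => ⟪G, u⟫ ^ 2)
      ((ballUniform d).map fun x => ‖x‖⁻¹ • x) := by
    apply Continuous.aestronglyMeasurable
    exact (continuous_const.inner continuous_id).pow 2
  rw [sphereUniform, integral_map (radial_measurable d).aemeasurable hm]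
  have hpt : ∀ x : EuclideanSpace ℝ (Fin d),
      ⟪G, ‖x‖⁻¹ • x⟫ ^ 2 = ⟪G, x⟫ ^ 2 / ‖x‖ ^ 2 := by
    intro x
    rcases eq_or_ne x 0 with rfl | hx
    · simp
    · have hxp : (0:ℝ) < ‖x‖ ^ 2 := pow_pos (norm_pos_iff.mpr hx) 2
      rw [real_inner_smul_right, mul_pow]
      field_simp
  simp_rw [hpt]
  exact ratio_integral d hd G

variable {E : Type*} [NormedAddCommGroup E] [InnerProductSpace ℝ E] [CompleteSpace E]

lemma zo_taylor (g : E → ℝ) (hg : Differentiable ℝ g) {L : ℝ} (hL : 0 ≤ L)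
    (hlip : ∀ a b, ‖gradient g a - gradient g b‖ ≤ L * ‖a - b‖) (x w : E) :
    |g (x + w) - g x - ⟪gradient g x, w⟫| ≤ L * ‖w‖ ^ 2 / 2 := by
  have hgc : Continuous (gradient g) := by
    refine (LipschitzWith.of_dist_le_mul (K := L.toNNReal) ?_).continuous
    intro a b
    rw [dist_eq_norm, dist_eq_norm, Real.coe_toNNReal L hL]
    exact hlip a b
  have hderiv : ∀ t : ℝ, HasDerivAt (fun t : ℝ => g (x + t • w))
      ⟪gradient g (x + t • w), w⟫ t := by
    intro t
    have hline : HasDerivAt (fun t : ℝ => x + t • w) w t := by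
      simpa using ((hasDerivAt_id t).smul_const w).const_add x
    have := ((hg (x + t • w)).hasGradientAt.hasFDerivAt).comp_hasDerivAt t hline
    simpa [Function.comp_def] using this
  have hcont : Continuous fun t : ℝ => ⟪gradient g (x + t • w), w⟫ := by
    exact (hgc.comp (by continuity)).inner continuous_const
  have hFTC : ∫ t in (0:ℝ)..1, ⟪gradient g (x + t • w), w⟫ = g (x + w) - g x := by
    have := intervalIntegral.integral_eq_sub_of_hasDerivAt
      (f := fun t : ℝ => g (x + t • w)) (f' := fun t => ⟪gradient g (x + t • w), w⟫)
      (a := 0) (b := 1) (fun t _ => hderiv t) (hcont.intervalIntegrable 0 1)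
    simpa using this
  have hsub : g (x + w) - g x - ⟪gradient g x, w⟫
      = ∫ t in (0:ℝ)..1, (⟪gradient g (x + t • w), w⟫ - ⟪gradient g x, w⟫) := by
    rw [intervalIntegral.integral_sub (hcont.intervalIntegrable 0 1)
      (intervalIntegrable_const), hFTC]
    simp
  rw [hsub]
  have hbound : ∀ t ∈ Set.Ioc (0:ℝ) 1,
      ‖⟪gradient g (x + t • w), w⟫ - ⟪gradient g x, w⟫‖ ≤ L * ‖w‖ ^ 2 * t := by
    intro t ht
    rw [← inner_sub_left]
    calc ‖⟪gradient g (x + t • w) - gradient g x, w⟫‖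
        ≤ ‖gradient g (x + t • w) - gradient g x‖ * ‖w‖ := norm_inner_le_norm _ _
      _ ≤ (L * ‖(x + t • w) - x‖) * ‖w‖ := by
          gcongr; exact hlip _ _
      _ = L * ‖w‖ ^ 2 * t := by
          rw [add_sub_cancel_left, norm_smul, Real.norm_eq_abs, abs_of_pos ht.1]
          ring
  have hInt : IntervalIntegrable (fun t : ℝ => L * ‖w‖ ^ 2 * t) volume 0 1 := by
    exact (continuous_const.mul continuous_id).intervalIntegrable 0 1
  rw [← Real.norm_eq_abs]
  calc ‖∫ t in (0:ℝ)..1, (⟪gradient g (x + t • w), w⟫ - ⟪gradient g x, w⟫)‖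
      ≤ |∫ t in (0:ℝ)..1, L * ‖w‖ ^ 2 * t| := by
        refine intervalIntegral.norm_integral_le_abs_of_norm_le ?_ hInt
        rw [Set.uIoc_of_le (zero_le_one' ℝ)]
        filter_upwards [ae_restrict_mem measurableSet_Ioc] with t ht
        exact hbound t ht
    _ = L * ‖w‖ ^ 2 / 2 := by
        rw [intervalIntegral.integral_const_mul, show (∫ t in (0:ℝ)..1, t) = 1/2 by simp]
        rw [abs_of_nonneg (by positivity)]
        ring


lemma zo_key (d : ℕ) (hd : 1 ≤ d) (g : EuclideanSpace ℝ (Fin d) → ℝ)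
    (hg : Differentiable ℝ g) (L : ℝ)
    (hlip : ∀ a b, ‖gradient g a - gradient g b‖ ≤ L * ‖a - b‖)
    (x : EuclideanSpace ℝ (Fin d)) (μ : ℝ) (hμ : 0 < μ) :
    (∫ u, ‖(((d : ℝ) / μ) * (g (x + μ • u) - g x)) • u‖ ^ 2 ∂(sphereUniform d)) ≤
      2 * (d : ℝ) * ‖gradient g x‖ ^ 2 + μ ^ 2 * (d : ℝ) ^ 2 * L ^ 2 / 2 := by
  have hd0 : (0:ℝ) < d := by exact_mod_cast hd
  have hL : 0 ≤ L := by
    have h := hlip (x + EuclideanSpace.single ⟨0, hd⟩ (1:ℝ)) x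
    have hn : ‖(x + EuclideanSpace.single ⟨0, hd⟩ (1:ℝ)) - x‖ = (1:ℝ) := by
      rw [add_sub_cancel_left, EuclideanSpace.norm_single]
      simp
    rw [hn, mul_one] at h
    exact le_trans (norm_nonneg _) h
  set G := gradient g x with hG
  set c : ℝ := (d:ℝ) / μ with hc
  have hsint : Integrable (fun u => ⟪G, u⟫ ^ 2) (sphereUniform d) := by
    refine (integrable_const (‖G‖ ^ 2)).mono'
      (((continuous_const.inner continuous_id).pow 2).measurable).aestronglyMeasurable ?_
    filter_upwards [sphereUniform_ae_norm_one d hd] with u hu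
    rw [Real.norm_eq_abs, abs_of_nonneg (by positivity : (0:ℝ) ≤ ⟪G, u⟫ ^ 2)]
    calc ⟪G, u⟫ ^ 2 = |⟪G, u⟫| ^ 2 := (sq_abs _).symm
      _ ≤ (‖G‖ * ‖u‖) ^ 2 := by gcongr; exact abs_real_inner_le_norm G u
      _ = ‖G‖ ^ 2 := by rw [hu]; ring
  have hBint : Integrable
      (fun u => 2 * c ^ 2 * μ ^ 2 * ⟪G, u⟫ ^ 2 + c ^ 2 * L ^ 2 * μ ^ 4 / 2)
      (sphereUniform d) := (hsint.const_mul _).add (integrable_const _)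
  have hmono : ∀ᵐ u ∂sphereUniform d,
      ‖(c * (g (x + μ • u) - g x)) • u‖ ^ 2 ≤
        2 * c ^ 2 * μ ^ 2 * ⟪G, u⟫ ^ 2 + c ^ 2 * L ^ 2 * μ ^ 4 / 2 := by
    filter_upwards [sphereUniform_ae_norm_one d hd] with u hu
    have htay := zo_taylor g hg hL hlip x (μ • u)
    have hnw : ‖μ • u‖ = μ := by
      rw [norm_smul, hu, Real.norm_eq_abs, abs_of_pos hμ, mul_one]
    rw [hnw] at htay
    have hinner : ⟪G, μ • u⟫ = μ * ⟪G, u⟫ := real_inner_smul_right G u μ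
    rw [hinner] at htay
    have h1 : ‖(c * (g (x + μ • u) - g x)) • u‖ ^ 2
        = c ^ 2 * (g (x + μ • u) - g x) ^ 2 := by
      rw [norm_smul, hu, mul_one, Real.norm_eq_abs, sq_abs, mul_pow]
    rw [h1]
    have hsq : (g (x + μ • u) - g x) ^ 2
        ≤ 2 * (μ * ⟪G, u⟫) ^ 2 + 2 * (L * μ ^ 2 / 2) ^ 2 := by
      have habs := abs_le.mp htay
      have h2 : (g (x + μ • u) - g x - μ * ⟪G, u⟫) ^ 2 ≤ (L * μ ^ 2 / 2) ^ 2 :=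
        sq_le_sq' (by linarith [habs.1]) habs.2
      nlinarith [sq_nonneg (g (x + μ • u) - g x - 2 * (μ * ⟪G, u⟫))]
    calc c ^ 2 * (g (x + μ • u) - g x) ^ 2
        ≤ c ^ 2 * (2 * (μ * ⟪G, u⟫) ^ 2 + 2 * (L * μ ^ 2 / 2) ^ 2) :=
          mul_le_mul_of_nonneg_left hsq (sq_nonneg c)
      _ = 2 * c ^ 2 * μ ^ 2 * ⟪G, u⟫ ^ 2 + c ^ 2 * L ^ 2 * μ ^ 4 / 2 := by ring
  have hle := integral_mono_of_nonneg
    (Filter.Eventually.of_forall fun u => by positivity) hBint hmono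
  have hval : ∫ u, (2 * c ^ 2 * μ ^ 2 * ⟪G, u⟫ ^ 2 + c ^ 2 * L ^ 2 * μ ^ 4 / 2)
      ∂sphereUniform d = 2 * (d:ℝ) * ‖G‖ ^ 2 + μ ^ 2 * (d:ℝ) ^ 2 * L ^ 2 / 2 := by
    rw [integral_add (hsint.const_mul _) (integrable_const _), integral_const_mul,
      sphere_moment d hd G, integral_const]
    simp only [measure_univ, probReal_univ, ENNReal.toReal_one, smul_eq_mul, one_mul]
    rw [hc]
    field_simp
  rw [hval] at hle
  exact hle

/-- Second-moment bound for the single-sample zeroth-order gradient estimators. -/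
theorem zo_estimator_second_moment
    (dx dy : ℕ) (hdx : 1 ≤ dx) (hdy : 1 ≤ dy)
    (f : EuclideanSpace ℝ (Fin dx) → EuclideanSpace ℝ (Fin dy) → ℝ)
    (hdiff : Differentiable ℝ
      fun p : EuclideanSpace ℝ (Fin dx) × EuclideanSpace ℝ (Fin dy) => f p.1 p.2)
    (Lx Ly : ℝ)
    (hlipx : ∀ (y : EuclideanSpace ℝ (Fin dy)) (x₁ x₂ : EuclideanSpace ℝ (Fin dx)),
      ‖gradient (fun x => f x y) x₁ - gradient (fun x => f x y) x₂‖ ≤ Lx * ‖x₁ - x₂‖)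
    (hlipy : ∀ (x : EuclideanSpace ℝ (Fin dx)) (y₁ y₂ : EuclideanSpace ℝ (Fin dy)),
      ‖gradient (fun y => f x y) y₁ - gradient (fun y => f x y) y₂‖ ≤ Ly * ‖y₁ - y₂‖)
    (x : EuclideanSpace ℝ (Fin dx)) (y : EuclideanSpace ℝ (Fin dy))
    (μ₁ μ₂ : ℝ) (hμ₁ : 0 < μ₁) (hμ₂ : 0 < μ₂) :
    (∫ u, ‖(((dx : ℝ) / μ₁) * (f (x + μ₁ • u) y - f x y)) • u‖ ^ 2 ∂(sphereUniform dx)) ≤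
      2 * (dx : ℝ) * ‖gradient (fun x' => f x' y) x‖ ^ 2 + μ₁ ^ 2 * (dx : ℝ) ^ 2 * Lx ^ 2 / 2 ∧
    (∫ v, ‖(((dy : ℝ) / μ₂) * (f x (y + μ₂ • v) - f x y)) • v‖ ^ 2 ∂(sphereUniform dy)) ≤
      2 * (dy : ℝ) * ‖gradient (fun y' => f x y') y‖ ^ 2 + μ₂ ^ 2 * (dy : ℝ) ^ 2 * Ly ^ 2 / 2 := by
  constructor
  · exact zo_key dx hdx (fun x' => f x' y)
      (hdiff.comp (differentiable_id.prodMk (differentiable_const y)))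
      Lx (hlipx y) x μ₁ hμ₁
  · exact zo_key dy hdy (fun y' => f x y')
      (hdiff.comp ((differentiable_const x).prodMk differentiable_id))
      Ly (hlipy x) y μ₂ hμ₂
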